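/- Let n ≥ 2 and σ ∈ (0,2). Let Γ : ℝ^n → ℝ be bounded and Lebesgue measurable with Γ ≤ 0 everywhere, Γ = 0 outside the closed ball of radius 3 centered at the origin, and Γ < 0 on a set of positive Lebesgue measure. Let P := Γ * K_{2−σ}. Then P is twice continuously differentiable on the set {x : |x| > 3}, and for every x₀ with |x₀| > 3 one has ΔP(x₀) < 0; consequently, for every affine function ℓ : ℝ^n → ℝ, the function P − ℓ does not attain a local minimum at x₀. -/

import Mathlib

open MeasureTheory

noncomputable section

/-- The constant `A(n,α) = π^{α - n/2} Γ((n-α)/2) / Γ(α/2)`. -/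
def rieszA (n : ℕ) (α : ℝ) : ℝ :=
  Real.pi ^ (α - (n : ℝ) / 2) * Real.Gamma (((n : ℝ) - α) / 2) / Real.Gamma (α / 2)

/-- The Riesz kernel of order `2 - σ`: `K_{2-σ}(y) = A(n,2-σ)·|y|^{-n+2-σ}`. -/
def rieszKernel (n : ℕ) (σ : ℝ) (y : EuclideanSpace ℝ (Fin n)) : ℝ :=
  rieszA n (2 - σ) * ‖y‖ ^ (-(n : ℝ) + 2 - σ)

/-- The Riesz potential `P = Γ * K_{2-σ}` (convolution over `ℝⁿ`). -/
def rieszPotential (n : ℕ) (σ : ℝ) (Γ : EuclideanSpace ℝ (Fin n) → ℝ)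
    (x : EuclideanSpace ℝ (Fin n)) : ℝ :=
  ∫ y : EuclideanSpace ℝ (Fin n), Γ y * rieszKernel n σ (x - y)

/-- The Laplacian `ΔP(x)`, i.e. the trace of the second derivative of `P` at `x`. -/
def laplacianAt {n : ℕ} (P : EuclideanSpace ℝ (Fin n) → ℝ)
    (x : EuclideanSpace ℝ (Fin n)) : ℝ :=
  ∑ i, iteratedFDeriv ℝ 2 P x ![EuclideanSpace.single i 1, EuclideanSpace.single i 1]

variable {F : Type*} [NormedAddCommGroup F] [InnerProductSpace ℝ F]

/-- The real inner product as a continuous bilinear map. -/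
def myB : F →L[ℝ] F →L[ℝ] ℝ := innerSL ℝ

lemma myB_apply (x v : F) : myB x v = (inner ℝ x v : ℝ) := rfl

lemma L1 (c₀ γ : ℝ) {x : F} (hx : x ≠ 0) :
    HasFDerivAt (fun z : F => c₀ * ((‖z‖ : ℝ) ^ 2) ^ γ)
      ((2 * c₀ * γ * ((‖x‖ : ℝ) ^ 2) ^ (γ - 1)) • myB x) x := by
  have hs : (‖x‖ : ℝ) ^ 2 ≠ 0 := pow_ne_zero _ (norm_ne_zero_iff.2 hx)
  have h1 : HasFDerivAt (fun z : F => ((‖z‖ : ℝ) ^ 2) ^ γ)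
      ((γ * ((‖x‖ : ℝ) ^ 2) ^ (γ - 1)) • (2 • innerSL ℝ x)) x :=
    (Real.hasDerivAt_rpow_const (p := γ) (Or.inl hs)).comp_hasFDerivAt (f := fun z : F => (‖z‖ : ℝ) ^ 2) x
      (hasStrictFDerivAt_norm_sq x).hasFDerivAt
  have := h1.const_mul c₀
  refine this.congr_fderiv ?_
  symm
  refine ContinuousLinearMap.ext fun y => ?_
  show _ * (myB x y) = _
  rw [myB_apply]
  simp [smul_smul]
  ring

lemma L2 (c₀ γ : ℝ) {x : F} (hx : x ≠ 0) :
    HasFDerivAt (fun z : F => (2 * c₀ * γ * ((‖z‖ : ℝ) ^ 2) ^ (γ - 1)) • myB z)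
      ((2 * c₀ * γ * ((‖x‖ : ℝ) ^ 2) ^ (γ - 1)) • (myB : F →L[ℝ] F →L[ℝ] ℝ) +
        ((4 * c₀ * γ * (γ - 1) * ((‖x‖ : ℝ) ^ 2) ^ (γ - 2)) • myB x).smulRight (myB x)) x := by
  have hc : HasFDerivAt (fun z : F => 2 * c₀ * γ * ((‖z‖ : ℝ) ^ 2) ^ (γ - 1))
      ((4 * c₀ * γ * (γ - 1) * ((‖x‖ : ℝ) ^ 2) ^ (γ - 2)) • myB x) x := by
    have := L1 (2 * c₀ * γ) (γ - 1) hx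
    convert this using 2 <;> ring
  exact hc.smul (myB (F := F)).hasFDerivAt

lemma second_deriv_q_apply (c₀ γ : ℝ) {x : F} (hx : x ≠ 0) (v : F) :
    fderiv ℝ (fderiv ℝ (fun z : F => c₀ * ((‖z‖ : ℝ) ^ 2) ^ γ)) x v v
      = (2 * c₀ * γ * ((‖x‖ : ℝ) ^ 2) ^ (γ - 1)) * (inner ℝ v v : ℝ)
        + (4 * c₀ * γ * (γ - 1) * ((‖x‖ : ℝ) ^ 2) ^ (γ - 2)) * (inner ℝ x v : ℝ) ^ 2 := by
  have hev : fderiv ℝ (fun z : F => c₀ * ((‖z‖ : ℝ) ^ 2) ^ γ)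
      =ᶠ[nhds x] fun z : F => (2 * c₀ * γ * ((‖z‖ : ℝ) ^ 2) ^ (γ - 1)) • myB z := by
    filter_upwards [isOpen_compl_singleton.mem_nhds (by simpa using hx)] with z hz
    exact (L1 c₀ γ (by simpa using hz)).fderiv
  rw [hev.fderiv_eq, (L2 c₀ γ hx).fderiv]
  simp only [ContinuousLinearMap.add_apply, ContinuousLinearMap.smul_apply,
    ContinuousLinearMap.smulRight_apply, myB_apply, smul_eq_mul]
  ring

lemma sum_inner_single_sq {n : ℕ} (x : EuclideanSpace ℝ (Fin n)) :
    ∑ i, (inner ℝ x (EuclideanSpace.single i 1) : ℝ) ^ 2 = (‖x‖ : ℝ) ^ 2 := by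
  have h : ∀ i, (inner ℝ x (EuclideanSpace.single i 1) : ℝ) = x i := by
    intro i
    rw [real_inner_comm, EuclideanSpace.inner_single_left]
    simp
  simp_rw [h]
  rw [← real_inner_self_eq_norm_sq]
  rw [PiLp.inner_apply]
  simp [RCLike.inner_apply, sq]

lemma sum_second_deriv_q {n : ℕ} (c₀ γ : ℝ) {x : EuclideanSpace ℝ (Fin n)} (hx : x ≠ 0) :
    ∑ i, fderiv ℝ (fderiv ℝ (fun z : EuclideanSpace ℝ (Fin n) => c₀ * ((‖z‖ : ℝ) ^ 2) ^ γ)) x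
        (EuclideanSpace.single i 1) (EuclideanSpace.single i 1)
      = (2 * c₀ * γ * ((n : ℝ) + 2 * γ - 2)) * ((‖x‖ : ℝ) ^ 2) ^ (γ - 1) := by
  have hs : (0:ℝ) < (‖x‖ : ℝ) ^ 2 :=
    pow_pos (norm_pos_iff.2 hx) 2
  have hone : ∀ i : Fin n, (inner ℝ (EuclideanSpace.single i (1:ℝ)) (EuclideanSpace.single i (1:ℝ)) : ℝ) = 1 := by
    intro i
    rw [real_inner_self_eq_norm_sq, EuclideanSpace.norm_single]
    norm_num
  simp_rw [fun i => second_deriv_q_apply c₀ γ hx (EuclideanSpace.single i (1:ℝ)), hone, mul_one]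
  rw [Finset.sum_add_distrib, Finset.sum_const, ← Finset.mul_sum, sum_inner_single_sq,
    Finset.card_univ, Fintype.card_fin]
  have key : ((‖x‖:ℝ) ^ 2) ^ (γ - 2) * (‖x‖:ℝ) ^ 2 = ((‖x‖:ℝ) ^ 2) ^ (γ - 1) := by
    rw [show γ - 1 = (γ - 2) + 1 by ring, Real.rpow_add_one hs.ne']
  rw [nsmul_eq_mul]
  linear_combination (4 * c₀ * γ * (γ - 1)) * key

lemma localmin_second_deriv_nonneg {E : Type*} [NormedAddCommGroup E] [NormedSpace ℝ E]
    {Q : E → ℝ} (hQ : ContDiff ℝ (⊤:ℕ∞) Q) {x₀ : E} (v : E) (hmin : IsLocalMin Q x₀) :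
    0 ≤ fderiv ℝ (fderiv ℝ Q) x₀ v v := by
  by_contra hc
  push_neg at hc
  set γc : ℝ → E := fun t => x₀ + t • v with hγc
  have hγc0 : γc 0 = x₀ := by simp [hγc]
  have hγ : ∀ t, HasDerivAt γc v t := by
    intro t
    have := ((hasDerivAt_id t).smul_const v).const_add x₀
    simp only [one_smul, id] at this
    exact this
  set φ : ℝ → ℝ := Q ∘ γc with hφ
  have hφmin : IsLocalMin φ 0 := by
    have : Filter.Tendsto γc (nhds 0) (nhds x₀) := by
      simpa [hγc0] using (hγ 0).continuousAt.tendsto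
    exact IsMinFilter.comp_tendsto (by rwa [hγc0]) this
  have hφd : ∀ t, HasDerivAt φ (fderiv ℝ Q (γc t) v) t := fun t =>
    ((hQ.differentiable (by simp) (γc t)).hasFDerivAt).comp_hasDerivAt t (hγ t)
  have hderiv : deriv φ = fun t => fderiv ℝ Q (γc t) v := funext fun t => (hφd t).deriv
  have hψ0 : deriv φ 0 = 0 := hφmin.deriv_eq_zero
  -- second derivative of φ at 0
  have hQ1 : ContDiff ℝ (⊤:ℕ∞) (fderiv ℝ Q) := hQ.fderiv_right (by simp)
  have hfd : HasFDerivAt (fderiv ℝ Q) (fderiv ℝ (fderiv ℝ Q) x₀) x₀ :=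
    ((hQ1.differentiable (by simp)) x₀).hasFDerivAt
  have hψd : HasDerivAt (deriv φ) (fderiv ℝ (fderiv ℝ Q) x₀ v v) 0 := by
    have h1 : HasFDerivAt (fun w => fderiv ℝ Q w v)
        ((ContinuousLinearMap.apply ℝ ℝ v).comp (fderiv ℝ (fderiv ℝ Q) x₀)) x₀ :=
      (ContinuousLinearMap.apply ℝ ℝ v).hasFDerivAt.comp x₀ hfd
    have h1' : HasFDerivAt (fun w => fderiv ℝ Q w v)
        ((ContinuousLinearMap.apply ℝ ℝ v).comp (fderiv ℝ (fderiv ℝ Q) x₀)) (γc 0) := by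
      rwa [hγc0]
    have h2 := h1'.comp_hasDerivAt 0 (hγ 0)
    rw [hderiv]
    exact h2
  -- the derivative of φ is eventually negative on the right
  have hslope : Filter.Tendsto (slope (deriv φ) 0) (nhdsWithin 0 (Set.Ioi 0))
      (nhds (fderiv ℝ (fderiv ℝ Q) x₀ v v)) :=
    (hasDerivAt_iff_tendsto_slope.1 hψd).mono_left
      (nhdsWithin_mono 0 (fun t ht => Set.mem_compl_singleton_iff.2 (ne_of_gt ht)))
  have hneg : ∀ᶠ t in nhdsWithin 0 (Set.Ioi 0), deriv φ t < 0 := by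
    have hev : ∀ᶠ t in nhdsWithin 0 (Set.Ioi 0), slope (deriv φ) 0 t < 0 :=
      hslope.eventually_lt_const hc
    filter_upwards [hev, self_mem_nhdsWithin] with t hst (hts : (0:ℝ) < t)
    have := slope_def_field (deriv φ) 0 t
    rw [this, hψ0, sub_zero, sub_zero] at hst
    have := mul_neg_of_neg_of_pos hst hts
    rwa [div_mul_cancel₀ _ (ne_of_gt hts)] at this
  obtain ⟨ε, hε, hIoo⟩ := mem_nhdsGT_iff_exists_Ioo_subset.1 hneg
  have hεpos : (0:ℝ) < ε := hε
  have hφcont : Continuous φ := (hQ.continuous).comp (by continuity)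
  have hanti : ∀ t ∈ Set.Ioo (0:ℝ) ε, φ t < φ 0 := by
    intro t ht
    have hA := strictAntiOn_of_deriv_neg (convex_Icc (0:ℝ) t) hφcont.continuousOn
      (fun z hz => by
        rw [interior_Icc] at hz
        exact hIoo ⟨hz.1, lt_of_lt_of_le hz.2 (le_of_lt ht.2)⟩)
    exact hA (Set.left_mem_Icc.2 (le_of_lt ht.1)) (Set.right_mem_Icc.2 (le_of_lt ht.1)) ht.1
  have ev1 : ∀ᶠ t in nhdsWithin 0 (Set.Ioi 0), φ 0 ≤ φ t :=
    hφmin.filter_mono nhdsWithin_le_nhds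
  have ev2 : Set.Ioo (0:ℝ) ε ∈ nhdsWithin 0 (Set.Ioi 0) :=
    Ioo_mem_nhdsGT hεpos
  obtain ⟨t, h1, h2⟩ := (ev1.and (Filter.eventually_of_mem ev2 (fun y hy => hy))).exists
  exact absurd h1 (not_le.2 (hanti t h2))

open scoped Convolution

section Conv
variable {n : ℕ}
local notation "E" => EuclideanSpace ℝ (Fin n)

set_option maxHeartbeats 2000000 in
lemma conv_second (Γ : E → ℝ) (hΓ : MeasureTheory.LocallyIntegrable Γ volume)
    {g : E → ℝ} (hg : ContDiff ℝ (⊤:ℕ∞) g) (hcg : HasCompactSupport g) (x₀ v : E) :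
    Integrable (fun y : E => Γ y * fderiv ℝ (fderiv ℝ g) (x₀ - y) v v) volume ∧
    fderiv ℝ (fderiv ℝ (Γ ⋆[ContinuousLinearMap.lsmul ℝ ℝ, volume] g)) x₀ v v
      = ∫ y : E, Γ y * fderiv ℝ (fderiv ℝ g) (x₀ - y) v v := by
  set L : ℝ →L[ℝ] ℝ →L[ℝ] ℝ := ContinuousLinearMap.lsmul ℝ ℝ with hL
  set g1 := fderiv ℝ g with hg1def
  set g2 := fderiv ℝ g1 with hg2def
  have hg1 : ContDiff ℝ (⊤:ℕ∞) g1 := hg.fderiv_right (by simp)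
  have hg2 : ContDiff ℝ (⊤:ℕ∞) g2 := hg1.fderiv_right (by simp)
  have hcg1 : HasCompactSupport g1 := hcg.fderiv ℝ
  have hcg2 : HasCompactSupport g2 := hcg1.fderiv ℝ
  have d1 : ∀ x : E, HasFDerivAt (Γ ⋆[L, volume] g)
      ((Γ ⋆[L.precompR (EuclideanSpace ℝ (Fin n)), volume] g1) x) x := fun x =>
    hcg.hasFDerivAt_convolution_right L hΓ (hg.of_le (by exact_mod_cast le_top)) x
  have e1 : fderiv ℝ (Γ ⋆[L, volume] g)
      = Γ ⋆[L.precompR (EuclideanSpace ℝ (Fin n)), volume] g1 :=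
    funext fun x => (d1 x).fderiv
  have d2 : HasFDerivAt (Γ ⋆[L.precompR (EuclideanSpace ℝ (Fin n)), volume] g1)
      ((convolution (𝕜 := ℝ) (F := EuclideanSpace ℝ (Fin n) →L[ℝ] EuclideanSpace ℝ (Fin n) →L[ℝ] ℝ) Γ g2 ((L.precompR (EuclideanSpace ℝ (Fin n))).precompR (EuclideanSpace ℝ (Fin n)))
        volume) x₀) x₀ :=
    hcg1.hasFDerivAt_convolution_right (L.precompR (EuclideanSpace ℝ (Fin n))) hΓ (hg1.of_le (by exact_mod_cast le_top)) x₀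
  have e2 : fderiv ℝ (fderiv ℝ (Γ ⋆[L, volume] g)) x₀
      = (convolution (𝕜 := ℝ) (F := EuclideanSpace ℝ (Fin n) →L[ℝ] EuclideanSpace ℝ (Fin n) →L[ℝ] ℝ) Γ g2 ((L.precompR (EuclideanSpace ℝ (Fin n))).precompR (EuclideanSpace ℝ (Fin n)))
        volume) x₀ := by
    rw [e1]; exact d2.fderiv
  have hch : HasCompactSupport (fun a : E => g2 a v) := by
    have := hcg2.comp_left
      (g := fun T : (EuclideanSpace ℝ (Fin n)) →L[ℝ] (EuclideanSpace ℝ (Fin n)) →L[ℝ] ℝ => T v)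
      rfl
    exact this
  have hhcont : Continuous (fun a : E => g2 a v) :=
    (ContinuousLinearMap.apply ℝ _ v).continuous.comp hg2.continuous
  have A1 := convolution_precompR_apply (𝕜 := ℝ)
    (L.precompR (EuclideanSpace ℝ (Fin n))) hΓ hcg2 hg2.continuous x₀ v
  have hch2 : HasCompactSupport (fun a : E => g2 a v v) := by
    have := hch.comp_left
      (g := fun T : (EuclideanSpace ℝ (Fin n)) →L[ℝ] ℝ => T v) rfl
    exact this
  have hh2cont : Continuous (fun a : E => g2 a v v) :=
    (ContinuousLinearMap.apply ℝ _ v).continuous.comp hhcont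
  have A2 := convolution_precompR_apply (𝕜 := ℝ) L hΓ hch hhcont x₀ v
  constructor
  · have := hch2.convolutionExists_right L hΓ hh2cont x₀
    simpa only [ConvolutionExistsAt, hL, ContinuousLinearMap.lsmul_apply, smul_eq_mul] using this
  · rw [e2, A1, A2]
    simp only [convolution_def, hL, ContinuousLinearMap.lsmul_apply, smul_eq_mul]

end Conv

section Key
variable {n : ℕ}
local notation "E" => EuclideanSpace ℝ (Fin n)

lemma integrable_of_bdd_compsupp (Γ : E → ℝ) (C : ℝ) (hC : ∀ z, |Γ z| ≤ C)
    (hm : Measurable Γ) (hsupp : ∀ z : E, z ∉ Metric.closedBall 0 3 → Γ z = 0) :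
    Integrable Γ volume := by
  have hind : Integrable ((Metric.closedBall (0:E) 3).indicator (fun _ => C)) volume :=
    (integrable_indicator_iff measurableSet_closedBall).2
      (integrableOn_const measure_closedBall_lt_top.ne)
  refine hind.mono' hm.aestronglyMeasurable (Filter.Eventually.of_forall fun y => ?_)
  by_cases hy : y ∈ Metric.closedBall (0:E) 3
  · rw [Set.indicator_of_mem hy]
    simpa [Real.norm_eq_abs] using hC y
  · rw [Set.indicator_of_notMem hy, hsupp y hy]
    simp

set_option maxHeartbeats 2000000 in
lemma key (hn : 2 ≤ n) {σ : ℝ} (hσ : σ ∈ Set.Ioo (0:ℝ) 2)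
    (Γ : E → ℝ) (hb : ∃ C : ℝ, ∀ z, |Γ z| ≤ C) (hm : Measurable Γ)
    (hneg : ∀ z, Γ z ≤ 0)
    (hsupp : ∀ z : E, z ∉ Metric.closedBall 0 3 → Γ z = 0)
    (hpos : 0 < volume {z : E | Γ z < 0})
    (x₀ : E) (hx₀ : 3 < ‖x₀‖) :
    ∃ Q : E → ℝ, ContDiff ℝ (⊤:ℕ∞) Q ∧
      rieszPotential n σ Γ =ᶠ[nhds x₀] Q ∧
      (∑ i, fderiv ℝ (fderiv ℝ Q) x₀ (EuclideanSpace.single i 1)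
        (EuclideanSpace.single i 1)) < 0 := by
  obtain ⟨hσ0, hσ2⟩ := hσ
  have hn2 : (2:ℝ) ≤ (n:ℝ) := by exact_mod_cast hn
  set t : ℝ := ‖x₀‖ - 3 with htdef
  have ht : 0 < t := by simp only [htdef]; linarith
  set A : ℝ := rieszA n (2 - σ) with hAdef
  have hA : 0 < A := by
    rw [hAdef]
    unfold rieszA
    apply div_pos
    · apply mul_pos (Real.rpow_pos_of_pos Real.pi_pos _)
      apply Real.Gamma_pos_of_pos
      linarith
    · apply Real.Gamma_pos_of_pos
      linarith
  set γ : ℝ := (-(n:ℝ) + 2 - σ) / 2 with hγdef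
  set q : E → ℝ := fun z => A * ((‖z‖ : ℝ) ^ 2) ^ γ with hqdef
  set b1 : ContDiffBump (0:E) := ⟨t/4, t/2, by positivity, by linarith⟩ with hb1def
  set b2 : ContDiffBump (0:E) := ⟨‖x₀‖ + 4, ‖x₀‖ + 5, by linarith, by linarith⟩ with hb2def
  set g : E → ℝ := fun z => b2 z * ((1 - b1 z) * q z) with hgdef
  -- g agrees with q on the annulus
  have hgq : ∀ z : E, t/2 < ‖z‖ → ‖z‖ < ‖x₀‖ + 4 → g z = q z := by
    intro z h1 h2
    have hb1z : b1 z = 0 := b1.zero_of_le_dist (by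
      rw [dist_zero_right]
      exact le_of_lt h1)
    have hb2z : b2 z = 1 := b2.one_of_mem_closedBall (by
      rw [Metric.mem_closedBall, dist_zero_right]
      exact le_of_lt h2)
    rw [hgdef]
    simp only [hb1z, hb2z]
    ring
  -- the kernel agrees with q away from 0
  have hkq : ∀ z : E, z ≠ 0 → rieszKernel n σ z = q z := by
    intro z hz
    rw [hqdef]
    unfold rieszKernel
    rw [← hAdef]
    congr 1
    have h2γ : (-(n:ℝ) + 2 - σ) = 2 * γ := by rw [hγdef]; ring
    rw [h2γ, Real.rpow_mul (norm_nonneg z) 2 γ]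
    congr 1
    rw [show ((2:ℝ)) = ((2:ℕ):ℝ) by norm_num, Real.rpow_natCast]
  -- smoothness of g
  have hgsmooth : ContDiff ℝ (⊤:ℕ∞) g := by
    rw [contDiff_iff_contDiffAt]
    intro z
    rcases lt_or_ge ‖z‖ (t/4) with hz | hz
    · have hev0 : g =ᶠ[nhds z] fun _ => (0:ℝ) := by
        filter_upwards [Metric.isOpen_ball.mem_nhds (mem_ball_zero_iff.2 hz)] with w hw
        have hw1 : b1 w = 1 := b1.one_of_mem_closedBall (Metric.ball_subset_closedBall hw)
        rw [hgdef]
        simp [hw1]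
      exact (contDiffAt_const (c := (0:ℝ))).congr_of_eventuallyEq hev0
    · have hz0 : z ≠ 0 := by
        intro h
        rw [h] at hz
        simp only [norm_zero] at hz
        linarith
      have hq : ContDiffAt ℝ (⊤:ℕ∞) q z := by
        rw [hqdef]
        refine contDiffAt_const.mul ?_
        have h1 : ContDiffAt ℝ (⊤:ℕ∞) (fun s : ℝ => s ^ γ) ((‖z‖ : ℝ)^2) :=
          Real.contDiffAt_rpow_const_of_ne (pow_ne_zero 2 (norm_ne_zero_iff.2 hz0))
        exact h1.comp z (contDiff_norm_sq ℝ).contDiffAt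
      rw [hgdef]
      exact b2.contDiff.contDiffAt.mul ((contDiffAt_const.sub b1.contDiff.contDiffAt).mul hq)
  -- compact support of g
  have hgcs : HasCompactSupport g := by
    apply HasCompactSupport.intro (isCompact_closedBall (0:E) (‖x₀‖ + 5))
    intro w hw
    have hd : ‖x₀‖ + 5 ≤ dist w 0 := by
      rw [Metric.mem_closedBall] at hw
      linarith [not_le.1 hw]
    have hb2w : b2 w = 0 := b2.zero_of_le_dist hd
    rw [hgdef]
    simp [hb2w]
  -- integrability of Γ
  obtain ⟨C, hC⟩ := hb
  have hΓi : Integrable Γ volume := integrable_of_bdd_compsupp Γ C hC hm hsupp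
  have hΓloc : MeasureTheory.LocallyIntegrable Γ volume := hΓi.locallyIntegrable
  -- the smooth replacement
  refine ⟨Γ ⋆[ContinuousLinearMap.lsmul ℝ ℝ, volume] g,
    hgcs.contDiff_convolution_right _ hΓloc hgsmooth, ?_, ?_⟩
  · -- eventual equality
    set r : ℝ := min (t/4) (1/2) with hrdef
    have hr : 0 < r := lt_min (by positivity) (by norm_num)
    have hrt : r ≤ t/4 := min_le_left _ _
    have hr2 : r ≤ 1/2 := min_le_right _ _
    filter_upwards [Metric.ball_mem_nhds x₀ hr] with x hx
    have hxx₀ : ‖x - x₀‖ < r := by rwa [Metric.mem_ball, dist_eq_norm] at hx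
    show rieszPotential n σ Γ x = _
    unfold rieszPotential
    rw [convolution_def]
    simp only [ContinuousLinearMap.lsmul_apply, smul_eq_mul]
    refine integral_congr_ae (Filter.Eventually.of_forall fun y => ?_)
    by_cases hy : Γ y = 0
    · simp [hy]
    · have hy3 : ‖y‖ ≤ 3 := by
        by_contra hyc
        exact hy (hsupp y (by
          rw [Metric.mem_closedBall, dist_zero_right]
          exact hyc))
      have h1 : ‖x₀‖ - ‖y‖ ≤ ‖x₀ - y‖ := norm_sub_norm_le x₀ y
      have h2 : ‖x₀ - y‖ - ‖x₀ - x‖ ≤ ‖x - y‖ := by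
        have h := norm_sub_norm_le (x₀ - y) (x₀ - x)
        rwa [sub_sub_sub_cancel_left] at h
      have h3 : ‖x₀ - x‖ < r := by rwa [norm_sub_rev]
      have hlow : t/2 < ‖x - y‖ := by
        simp only [htdef] at *
        linarith
      have hxn : ‖x‖ ≤ ‖x₀‖ + r := by
        have := norm_sub_norm_le x x₀
        linarith
      have hup : ‖x - y‖ < ‖x₀‖ + 4 := by
        have := norm_sub_le x y
        linarith
      have hz0 : x - y ≠ 0 := by
        intro h
        rw [h] at hlow
        simp only [norm_zero] at hlow
        linarith
      show Γ y * rieszKernel n σ (x - y) = Γ y * g (x - y)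
      rw [hkq _ hz0, hgq _ hlow hup]
  · -- negativity of the Laplacian
    set c : ℝ := A * σ * ((n:ℝ) - 2 + σ) with hcdef
    have hcpos : 0 < c := by
      rw [hcdef]
      apply mul_pos (mul_pos hA hσ0)
      linarith
    set lap : E → ℝ := fun z => c * ((‖z‖ : ℝ) ^ 2) ^ (γ - 1) with hlapdef
    have hscal : 2 * A * γ * ((n:ℝ) + 2 * γ - 2) = c := by
      rw [hcdef, hγdef]
      ring
    have CV := fun i : Fin n =>
      conv_second Γ hΓloc hgsmooth hgcs x₀ (EuclideanSpace.single i 1)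
    have hpt : ∀ y : E,
        (∑ i, Γ y * fderiv ℝ (fderiv ℝ g) (x₀ - y) (EuclideanSpace.single i 1)
          (EuclideanSpace.single i 1)) = Γ y * lap (x₀ - y) := by
      intro y
      by_cases hy : Γ y = 0
      · simp [hy]
      · have hy3 : ‖y‖ ≤ 3 := by
          by_contra hyc
          exact hy (hsupp y (by
            rw [Metric.mem_closedBall, dist_zero_right]
            exact hyc))
        have h1 : t/2 < ‖x₀ - y‖ := by
          have := norm_sub_norm_le x₀ y
          simp only [htdef] at *
          linarith
        have h2 : ‖x₀ - y‖ < ‖x₀‖ + 4 := by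
          have := norm_sub_le x₀ y
          linarith
        have hz0 : x₀ - y ≠ 0 := by
          intro h
          rw [h] at h1
          simp only [norm_zero] at h1
          linarith
        have hU : IsOpen {w : E | t/2 < ‖w‖ ∧ ‖w‖ < ‖x₀‖ + 4} :=
          (isOpen_lt continuous_const continuous_norm).inter
            (isOpen_lt continuous_norm continuous_const)
        have hloc : g =ᶠ[nhds (x₀ - y)] q := by
          filter_upwards [hU.mem_nhds ⟨h1, h2⟩] with w hw using hgq w hw.1 hw.2
        have hdd : fderiv ℝ (fderiv ℝ g) (x₀ - y) = fderiv ℝ (fderiv ℝ q) (x₀ - y) :=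
          (hloc.fderiv).fderiv_eq
        simp only [hdd]
        rw [← Finset.mul_sum]
        rw [hqdef]
        rw [sum_second_deriv_q A γ hz0]
        rw [hlapdef]
        rw [hscal]
    have hKi : Integrable (fun y : E => Γ y * lap (x₀ - y)) volume := by
      have heq : (fun y : E => Γ y * lap (x₀ - y))
          = fun y => ∑ i, Γ y * fderiv ℝ (fderiv ℝ g) (x₀ - y) (EuclideanSpace.single i 1)
            (EuclideanSpace.single i 1) := funext fun y => (hpt y).symm
      rw [heq]
      exact integrable_finset_sum _ (fun i _ => (CV i).1)
    have hsum : (∑ i, fderiv ℝ (fderiv ℝ (Γ ⋆[ContinuousLinearMap.lsmul ℝ ℝ, volume] g)) x₀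
        (EuclideanSpace.single i 1) (EuclideanSpace.single i 1))
        = ∫ y : E, Γ y * lap (x₀ - y) := by
      rw [Finset.sum_congr rfl (fun i _ => (CV i).2),
        ← integral_finset_sum _ (fun i _ => (CV i).1)]
      exact integral_congr_ae (Filter.Eventually.of_forall hpt)
    rw [hsum]
    have hnn : 0 ≤ fun y : E => -(Γ y * lap (x₀ - y)) := by
      intro y
      simp only [Pi.zero_apply, neg_nonneg]
      apply mul_nonpos_iff.2
      refine Or.inr ⟨hneg y, ?_⟩
      rw [hlapdef]
      positivity
    have hsupp' : {z : E | Γ z < 0} ⊆ Function.support (fun y : E => -(Γ y * lap (x₀ - y))) := by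
      intro y (hy : Γ y < 0)
      have hy3 : ‖y‖ ≤ 3 := by
        by_contra hyc
        rw [hsupp y (by
          rw [Metric.mem_closedBall, dist_zero_right]
          exact hyc)] at hy
        exact lt_irrefl 0 hy
      have h1 : 0 < ‖x₀ - y‖ := by
        have := norm_sub_norm_le x₀ y
        linarith
      have hlp : 0 < lap (x₀ - y) := by
        rw [hlapdef]
        apply mul_pos hcpos
        apply Real.rpow_pos_of_pos
        positivity
      have : 0 < -(Γ y * lap (x₀ - y)) := by nlinarith
      exact ne_of_gt this
    have hpos' : 0 < ∫ y : E, -(Γ y * lap (x₀ - y)) := by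
      rw [integral_pos_iff_support_of_nonneg hnn hKi.neg]
      exact lt_of_lt_of_le hpos (measure_mono hsupp')
    rw [integral_neg] at hpos'
    linarith

end Key

set_option maxHeartbeats 1000000 in
/-- `P` is `C²` outside the closed ball of radius 3, `ΔP < 0` there, and
hence `P - ℓ` has no local minimum outside the closed ball for any affine `ℓ`. -/
theorem stmt1 (n : ℕ) (hn : 2 ≤ n) (σ : ℝ) (hσ : σ ∈ Set.Ioo (0 : ℝ) 2)
    (Γ : EuclideanSpace ℝ (Fin n) → ℝ)
    (hb : ∃ C : ℝ, ∀ z, |Γ z| ≤ C) (hm : Measurable Γ)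
    (hneg : ∀ z, Γ z ≤ 0)
    (hsupp : ∀ z : EuclideanSpace ℝ (Fin n), z ∉ Metric.closedBall 0 3 → Γ z = 0)
    (hpos : 0 < volume {z : EuclideanSpace ℝ (Fin n) | Γ z < 0})
    (P : EuclideanSpace ℝ (Fin n) → ℝ) (hP : P = rieszPotential n σ Γ) :
    ContDiffOn ℝ 2 P {x : EuclideanSpace ℝ (Fin n) | 3 < ‖x‖} ∧
    ∀ x₀ : EuclideanSpace ℝ (Fin n), 3 < ‖x₀‖ →
      laplacianAt P x₀ < 0 ∧
      ∀ ℓ : EuclideanSpace ℝ (Fin n) →ᵃ[ℝ] ℝ,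
        ¬ IsLocalMin (fun z => P z - ℓ z) x₀ := by
  subst hP
  have h2top : (2 : WithTop ℕ∞) ≤ ((⊤:ℕ∞) : WithTop ℕ∞) := by
    rw [show ((2:WithTop ℕ∞)) = ((2:ℕ∞) : WithTop ℕ∞) by rfl]
    exact_mod_cast (le_top : (2:ℕ∞) ≤ ⊤)
  have hlap : ∀ (f : EuclideanSpace ℝ (Fin n) → ℝ) (x : EuclideanSpace ℝ (Fin n)),
      laplacianAt f x = ∑ i, fderiv ℝ (fderiv ℝ f) x (EuclideanSpace.single i 1)
        (EuclideanSpace.single i 1) := by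
    intro f x
    unfold laplacianAt
    refine Finset.sum_congr rfl fun i _ => ?_
    rw [iteratedFDeriv_two_apply]
    simp
  have hkey := fun (x₀ : EuclideanSpace ℝ (Fin n)) (hx₀ : 3 < ‖x₀‖) =>
    key hn hσ Γ hb hm hneg hsupp hpos x₀ hx₀
  constructor
  · intro x hx
    obtain ⟨Q, hQ, hev, _⟩ := hkey x hx
    exact ((hQ.of_le h2top).contDiffAt.congr_of_eventuallyEq hev).contDiffWithinAt
  · intro x₀ hx₀
    obtain ⟨Q, hQ, hev, hQlap⟩ := hkey x₀ hx₀
    have hddP : fderiv ℝ (fderiv ℝ (rieszPotential n σ Γ)) x₀ = fderiv ℝ (fderiv ℝ Q) x₀ :=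
      (hev.fderiv).fderiv_eq
    have hlapP : laplacianAt (rieszPotential n σ Γ) x₀ < 0 := by
      rw [hlap (rieszPotential n σ Γ) x₀, hddP]
      exact hQlap
    refine ⟨hlapP, ?_⟩
    intro ℓ hmin
    set Lc := LinearMap.toContinuousLinearMap ℓ.linear with hLc
    have hdecomp : (fun w : EuclideanSpace ℝ (Fin n) => ℓ w) = fun w => Lc w + ℓ 0 := by
      funext w
      have h := congrFun ℓ.decomp w
      simpa [hLc, Pi.add_apply] using h
    have hℓd : ∀ z, HasFDerivAt (fun w : EuclideanSpace ℝ (Fin n) => ℓ w) Lc z := by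
      intro z
      rw [hdecomp]
      exact Lc.hasFDerivAt.add_const (ℓ 0)
    have hℓsmooth : ContDiff ℝ (⊤:ℕ∞) (fun w : EuclideanSpace ℝ (Fin n) => ℓ w) := by
      rw [hdecomp]
      exact Lc.contDiff.add contDiff_const
    set F := fun z : EuclideanSpace ℝ (Fin n) => Q z - ℓ z with hFdef
    have hQF : ContDiff ℝ (⊤:ℕ∞) F := hQ.sub hℓsmooth
    have hevF : (fun z : EuclideanSpace ℝ (Fin n) => rieszPotential n σ Γ z - ℓ z)
        =ᶠ[nhds x₀] F := hev.sub (Filter.EventuallyEq.refl _ _)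
    have hminF : IsLocalMin F x₀ := by
      have h0 : rieszPotential n σ Γ x₀ - ℓ x₀ = F x₀ := hevF.eq_of_nhds
      have hminev : ∀ᶠ z in nhds x₀,
          rieszPotential n σ Γ x₀ - ℓ x₀ ≤ rieszPotential n σ Γ z - ℓ z := hmin
      show ∀ᶠ z in nhds x₀, F x₀ ≤ F z
      filter_upwards [hminev, hevF] with z h1 h2
      rw [← h2, ← h0]
      exact h1
    have hQ1 : ContDiff ℝ (⊤:ℕ∞) (fderiv ℝ Q) := hQ.fderiv_right (by simp)
    have hQfd : HasFDerivAt (fderiv ℝ Q) (fderiv ℝ (fderiv ℝ Q) x₀) x₀ :=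
      ((hQ1.differentiable (by simp)) x₀).hasFDerivAt
    have hFd : ∀ z, HasFDerivAt F (fderiv ℝ Q z - Lc) z := fun z =>
      ((hQ.differentiable (by simp)) z).hasFDerivAt.sub (hℓd z)
    have hfF : fderiv ℝ F = fun z => fderiv ℝ Q z - Lc := funext fun z => (hFd z).fderiv
    have hFdd : fderiv ℝ (fderiv ℝ F) x₀ = fderiv ℝ (fderiv ℝ Q) x₀ := by
      rw [hfF]
      exact (hQfd.sub_const Lc).fderiv
    have hge : 0 ≤ ∑ i, fderiv ℝ (fderiv ℝ Q) x₀ (EuclideanSpace.single i 1)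
        (EuclideanSpace.single i 1) := by
      rw [← hFdd]
      exact Finset.sum_nonneg fun i _ => localmin_second_deriv_nonneg hQF _ hminF
    linarith
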